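/- Let P and Q be orthogonal projections on a complex Hilbert space H. Then P ⇔ Q := (P ⇒ Q) ∧ (Q ⇒ P) is the orthogonal projection onto the set { ψ ∈ H : Pψ = Qψ }; in particular this set is a closed linear subspace of H. -/

import Mathlib

variable {H : Type} [NormedAddCommGroup H] [InnerProductSpace ℂ H] [CompleteSpace H]

/-- `P` is an orthogonal projection on `H`: self-adjoint and idempotent. -/
def IsOrthProj (P : H →L[ℂ] H) : Prop := IsSelfAdjoint P ∧ P * P = P

set_option linter.unusedSectionVars false in
/-- The range of the Sasaki arrow equals the kernel of `(1-Q)∘P`. -/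
lemma sasaki_sup_eq_ker (P Q : H →L[ℂ] H) (hP : P * P = P) (hQ : Q * Q = Q) :
    (LinearMap.range ((1 - P : H →L[ℂ] H) : H →ₗ[ℂ] H) ⊔ (LinearMap.range ((P : H →L[ℂ] H) : H →ₗ[ℂ] H) ⊓ LinearMap.range ((Q : H →L[ℂ] H) : H →ₗ[ℂ] H))) =
      LinearMap.ker (((1 - Q) * P : H →L[ℂ] H) : H →ₗ[ℂ] H) := by
  apply le_antisymm
  · apply sup_le
    · rintro x ⟨ψ, rfl⟩
      have h : P (P ψ) = P ψ := congrArg (fun T : H →L[ℂ] H => T ψ) hP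
      simp [LinearMap.mem_ker, h]
    · rintro x ⟨⟨ψ, rfl⟩, φ, hφ⟩
      have hPx : P (P ψ) = P ψ := congrArg (fun T : H →L[ℂ] H => T ψ) hP
      have hQx : Q (P ψ) = P ψ := by
        have hφ' : Q φ = P ψ := hφ
        rw [← hφ']; exact congrArg (fun T : H →L[ℂ] H => T φ) hQ
      simp [LinearMap.mem_ker, hPx, hQx]
  · intro x hx
    simp [LinearMap.mem_ker, sub_eq_zero] at hx
    have hx2 : x = (1 - P) x + P x := by simp
    rw [hx2]
    exact Submodule.add_mem_sup ⟨x, rfl⟩ ⟨⟨x, rfl⟩, ⟨P x, hx.symm⟩⟩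

/-- If `QPx = Px` and `PQx = Qx` for self-adjoint projections, then `Px = Qx`. -/
lemma key_eq (P Q : H →L[ℂ] H) (hP : IsSelfAdjoint P) (hP2 : P * P = P)
    (hQ : IsSelfAdjoint Q) (hQ2 : Q * Q = Q) (x : H)
    (hp : Q (P x) = P x) (hq : P (Q x) = Q x) : P x = Q x := by
  have hPs : (P : H →ₗ[ℂ] H).IsSymmetric :=
    (ContinuousLinearMap.isSelfAdjoint_iff_isSymmetric.mp hP)
  have hQs : (Q : H →ₗ[ℂ] H).IsSymmetric :=
    (ContinuousLinearMap.isSelfAdjoint_iff_isSymmetric.mp hQ)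
  have hPP : P (P x) = P x := congrArg (fun T : H →L[ℂ] H => T x) hP2
  have hQQ : Q (Q x) = Q x := congrArg (fun T : H →L[ℂ] H => T x) hQ2
  have h1 : (inner ℂ (P x) (Q x) : ℂ) = inner ℂ (P x) (P x) := by
    calc (inner ℂ (P x) (Q x) : ℂ) = inner ℂ (Q (P x)) x := (hQs (P x) x).symm
    _ = inner ℂ (P x) x := by rw [hp]
    _ = inner ℂ (P (P x)) x := by rw [hPP]
    _ = inner ℂ (P x) (P x) := hPs (P x) x
  have h2 : (inner ℂ (Q x) (P x) : ℂ) = inner ℂ (Q x) (Q x) := by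
    calc (inner ℂ (Q x) (P x) : ℂ) = inner ℂ (P (Q x)) x := (hPs (Q x) x).symm
    _ = inner ℂ (Q x) x := by rw [hq]
    _ = inner ℂ (Q (Q x)) x := by rw [hQQ]
    _ = inner ℂ (Q x) (Q x) := hQs (Q x) x
  have h0 : (inner ℂ (P x - Q x) (P x - Q x) : ℂ) = 0 := by
    rw [inner_sub_sub_self, h1, h2]; ring
  exact sub_eq_zero.mp (inner_self_eq_zero.mp h0)

/-- `P ⇔ Q := (P ⇒ Q) ∧ (Q ⇒ P)` (with `⇒` the Sasaki arrow) is the orthogonal projection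
onto `{ψ | Pψ = Qψ}`: the range of `P ⇔ Q`, i.e. the intersection of the ranges of the two
Sasaki arrows, equals this set; in particular the set is a closed linear subspace of `H`. -/
theorem stmt4 (P Q : H →L[ℂ] H) (hP : IsOrthProj P) (hQ : IsOrthProj Q) :
    ((((LinearMap.range ((1 - P : H →L[ℂ] H) : H →ₗ[ℂ] H) ⊔ (LinearMap.range ((P : H →L[ℂ] H) : H →ₗ[ℂ] H) ⊓ LinearMap.range ((Q : H →L[ℂ] H) : H →ₗ[ℂ] H))).topologicalClosure ⊓
        (LinearMap.range ((1 - Q : H →L[ℂ] H) : H →ₗ[ℂ] H) ⊔ (LinearMap.range ((Q : H →L[ℂ] H) : H →ₗ[ℂ] H) ⊓ LinearMap.range ((P : H →L[ℂ] H) : H →ₗ[ℂ] H))).topologicalClosure :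
        Submodule ℂ H)) : Set H) = {ψ : H | P ψ = Q ψ} ∧
      IsClosed {ψ : H | P ψ = Q ψ} := by
  obtain ⟨hP1, hP2⟩ := hP
  obtain ⟨hQ1, hQ2⟩ := hQ
  have e1 := sasaki_sup_eq_ker P Q hP2 hQ2
  have e2 := sasaki_sup_eq_ker Q P hQ2 hP2
  have c1 : (LinearMap.range ((1 - P : H →L[ℂ] H) : H →ₗ[ℂ] H) ⊔ (LinearMap.range ((P : H →L[ℂ] H) : H →ₗ[ℂ] H) ⊓ LinearMap.range ((Q : H →L[ℂ] H) : H →ₗ[ℂ] H))).topologicalClosure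
      = LinearMap.ker (((1 - Q) * P : H →L[ℂ] H) : H →ₗ[ℂ] H) := by
    rw [e1]
    exact IsClosed.submodule_topologicalClosure_eq (ContinuousLinearMap.isClosed_ker _)
  have c2 : (LinearMap.range ((1 - Q : H →L[ℂ] H) : H →ₗ[ℂ] H) ⊔ (LinearMap.range ((Q : H →L[ℂ] H) : H →ₗ[ℂ] H) ⊓ LinearMap.range ((P : H →L[ℂ] H) : H →ₗ[ℂ] H))).topologicalClosure
      = LinearMap.ker (((1 - P) * Q : H →L[ℂ] H) : H →ₗ[ℂ] H) := by
    rw [e2]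
    exact IsClosed.submodule_topologicalClosure_eq (ContinuousLinearMap.isClosed_ker _)
  have hset : ((((LinearMap.range ((1 - P : H →L[ℂ] H) : H →ₗ[ℂ] H) ⊔ (LinearMap.range ((P : H →L[ℂ] H) : H →ₗ[ℂ] H) ⊓ LinearMap.range ((Q : H →L[ℂ] H) : H →ₗ[ℂ] H))).topologicalClosure ⊓
        (LinearMap.range ((1 - Q : H →L[ℂ] H) : H →ₗ[ℂ] H) ⊔ (LinearMap.range ((Q : H →L[ℂ] H) : H →ₗ[ℂ] H) ⊓ LinearMap.range ((P : H →L[ℂ] H) : H →ₗ[ℂ] H))).topologicalClosure :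
        Submodule ℂ H)) : Set H) = {ψ : H | P ψ = Q ψ} := by
    rw [c1, c2]
    ext x
    simp only [SetLike.mem_coe, Submodule.mem_inf, LinearMap.mem_ker, Set.mem_setOf_eq,
      ContinuousLinearMap.coe_coe, ContinuousLinearMap.mul_apply, ContinuousLinearMap.sub_apply,
      ContinuousLinearMap.one_apply, sub_eq_zero]
    constructor
    · rintro ⟨h1, h2⟩
      exact key_eq P Q hP1 hP2 hQ1 hQ2 x h1.symm h2.symm
    · intro h
      have hPP : P (P x) = P x := congrArg (fun T : H →L[ℂ] H => T x) hP2
      have hQQ : Q (Q x) = Q x := congrArg (fun T : H →L[ℂ] H => T x) hQ2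
      constructor
      · rw [h, hQQ]
      · rw [← h, hPP]
  refine ⟨hset, ?_⟩
  rw [← hset]
  exact IsClosed.inter
    (Submodule.isClosed_topologicalClosure _) (Submodule.isClosed_topologicalClosure _)
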